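/- arXiv:1211.4953 — 3 statements merged into one kernel-verified Lean document; each statement's English description precedes it below -/
import Mathlib

section
/- Let f₁, …, f_m : X → (-∞, +∞] be proper lower semicontinuous convex functions on a real Banach space X with ⋂ᵢ dom fᵢ ≠ ∅, and suppose there exists K > 0 such that for every x ∈ ⋂ᵢ dom fᵢ and ε > 0 the weak* closure of ∑ᵢ ∂_ε fᵢ(x) is contained in ∑ᵢ ∂_{Kε} fᵢ(x). Then for every x ∈ X, ∂(f₁+⋯+f_m)(x) = ⋂_{η > 0} [ ∂_η f₁(x) + ⋯ + ∂_η f_m(x) ]. -/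
open Pointwise Topology Set

noncomputable section

variable {X : Type*} [NormedAddCommGroup X] [NormedSpace ℝ X]

/-- `f` is proper: never `-∞` and finite somewhere. -/
def EProper (f : X → EReal) : Prop := (∀ x, f x ≠ ⊥) ∧ ∃ x, f x ≠ ⊤

/-- effective domain of `f`. -/
def edom (f : X → EReal) : Set X := {x | f x < ⊤}

/-- convexity for extended-real-valued functions. -/
def EConvex (f : X → EReal) : Prop :=
  ∀ x y : X, ∀ t : ℝ, 0 ≤ t → t ≤ 1 →
    f (t • x + (1 - t) • y) ≤ (t : EReal) * f x + ((1 - t : ℝ) : EReal) * f y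

/-- the ε-subdifferential of `f` at `x`, a subset of the weak* dual. -/
def epsSubdiff (f : X → EReal) (ε : ℝ) (x : X) : Set (WeakDual ℝ X) :=
  {p | f x ≠ ⊤ ∧ f x ≠ ⊥ ∧ ∀ y : X, (p (y - x) : EReal) + f x ≤ f y + (ε : EReal)}

/-- the (exact) subdifferential of `f` at `x`. -/
def subdiff (f : X → EReal) (x : X) : Set (WeakDual ℝ X) := epsSubdiff f 0 x

/-- the Fenchel conjugate of `f`. -/
def fconj (f : X → EReal) (p : WeakDual ℝ X) : EReal := ⨆ x : X, (p x : EReal) - f x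

/-- the infimal convolution of finitely many functions on the dual. -/
def infConv {m : ℕ} (g : Fin m → WeakDual ℝ X → EReal) (p : WeakDual ℝ X) : EReal :=
  ⨅ (y : Fin m → WeakDual ℝ X) (_ : ∑ i, y i = p), ∑ i, g i (y i)

/-- exactness (attainment) of the infimal convolution at `p`. -/
def infConvExactAt {m : ℕ} (g : Fin m → WeakDual ℝ X → EReal) (p : WeakDual ℝ X) : Prop :=
  ∃ y : Fin m → WeakDual ℝ X, ∑ i, y i = p ∧ infConv g p = ∑ i, g i (y i)

/-- the epigraph of the Fenchel conjugate of `f`, in `X* × ℝ`. -/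
def epiConj (f : X → EReal) : Set ((WeakDual ℝ X) × ℝ) :=
  {q | fconj f q.1 ≤ (q.2 : EReal)}


set_option linter.unusedSectionVars false
set_option linter.unusedVariables false
set_option maxHeartbeats 1000000

lemma mem_finsetSum_sets {G : Type*} [AddCommMonoid G] {ι : Type*} {s : Finset ι} {S : ι → Set G}
    {a : G} : a ∈ ∑ i ∈ s, S i ↔ ∃ g : ι → G, (∀ i ∈ s, g i ∈ S i) ∧ ∑ i ∈ s, g i = a := by
  classical
  induction s using Finset.cons_induction generalizing a with
  | empty => simp [Set.mem_zero, eq_comm]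
  | cons j s hj ih =>
    simp only [Finset.sum_cons, Set.mem_add, ih]
    constructor
    · rintro ⟨x, hx, y, ⟨g, hg, rfl⟩, rfl⟩
      refine ⟨Function.update g j x, ?_, ?_⟩
      · intro i hi
        rcases Finset.mem_cons.1 hi with rfl | hi2
        · simpa using hx
        · rw [Function.update_of_ne (by intro h; subst h; exact hj hi2)]; exact hg i hi2
      · rw [Function.update_self, Finset.sum_update_of_notMem hj]
    · rintro ⟨g, hg, rfl⟩
      exact ⟨g j, hg j (Finset.mem_cons_self j s), ∑ i ∈ s, g i,
        ⟨g, fun i hi => hg i (Finset.mem_cons_of_mem hi), rfl⟩, rfl⟩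

lemma myEReal_le_of_forall_le_add {a b : EReal} (h : ∀ η : ℝ, 0 < η → a ≤ b + (η : EReal)) :
    a ≤ b := by
  induction b with
  | bot =>
    have := h 1 one_pos
    simpa using this
  | coe b =>
    induction a with
    | bot => exact bot_le
    | coe a =>
      have : ∀ η : ℝ, 0 < η → a ≤ b + η := by
        intro η hη
        have := h η hη
        rw [← EReal.coe_add] at this
        exact_mod_cast this
      exact_mod_cast le_of_forall_pos_le_add this
    | top =>
      have := h 1 one_pos
      rw [← EReal.coe_add] at this
      exact absurd (top_le_iff.1 this) (EReal.coe_ne_top _)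
  | top => exact le_top

lemma myEReal_sum_ne_bot {ι : Type*} {s : Finset ι} {g : ι → EReal} (h : ∀ i ∈ s, g i ≠ ⊥) :
    ∑ i ∈ s, g i ≠ ⊥ := by
  classical
  induction s using Finset.cons_induction with
  | empty => simp
  | cons j s hj ih =>
    rw [Finset.sum_cons]
    rw [Ne, EReal.add_eq_bot_iff]
    push_neg
    exact ⟨h j (Finset.mem_cons_self j s), ih fun i hi => h i (Finset.mem_cons_of_mem hi)⟩

lemma myEReal_sum_eq_top {ι : Type*} {s : Finset ι} {g : ι → EReal} (h : ∀ i ∈ s, g i ≠ ⊥)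
    {j : ι} (hj : j ∈ s) (hjt : g j = ⊤) : ∑ i ∈ s, g i = ⊤ := by
  classical
  rw [← Finset.add_sum_erase _ _ hj, hjt]
  exact EReal.top_add_of_ne_bot (myEReal_sum_ne_bot fun i hi => h i (Finset.mem_of_mem_erase hi))

lemma myEReal_coe_finset_sum {ι : Type*} {s : Finset ι} {g : ι → ℝ} :
    ((∑ i ∈ s, g i : ℝ) : EReal) = ∑ i ∈ s, (g i : EReal) :=
  map_sum (⟨⟨(fun r : ℝ => (r : EReal)), EReal.coe_zero⟩, fun _ _ => EReal.coe_add _ _⟩ :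
    ℝ →+ EReal) _ _

/-- `(q, γ)` is an affine minorant pair for `f`. -/
def MinorPair (f : X → EReal) (q : WeakDual ℝ X) (γ : ℝ) : Prop :=
  ∀ y : X, ((q y - γ : ℝ) : EReal) ≤ f y

def epiSet (f : X → EReal) : Set (X × ℝ) := {z | f z.1 ≤ (z.2 : EReal)}

lemma real_of_le_coe {f : X → EReal} (hp : EProper f) {y : X} {s : ℝ} (h : f y ≤ (s : EReal)) :
    ∃ a : ℝ, f y = (a : EReal) ∧ a ≤ s := by
  have hb := hp.1 y
  have ht : f y ≠ ⊤ := ne_top_of_le_ne_top (EReal.coe_ne_top s) h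
  refine ⟨(f y).toReal, (EReal.coe_toReal ht hb).symm, ?_⟩
  rw [← EReal.coe_toReal ht hb] at h
  exact_mod_cast h

lemma epiSet_closed {f : X → EReal} (hl : LowerSemicontinuous f) : IsClosed (epiSet f) := by
  rw [← isOpen_compl_iff]
  rw [isOpen_iff_mem_nhds]
  rintro ⟨y₀, s₀⟩ h
  simp only [mem_compl_iff, epiSet, mem_setOf_eq, not_le] at h
  obtain ⟨c, hc1, hc2⟩ : ∃ c : ℝ, (s₀ : EReal) < (c : EReal) ∧ (c : EReal) < f y₀ := by
    rcases eq_or_ne (f y₀) ⊤ with ht | ht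
    · exact ⟨s₀ + 1, by exact_mod_cast lt_add_one s₀, by rw [ht]; exact EReal.coe_lt_top _⟩
    · have hb : f y₀ ≠ ⊥ := by
        intro hb; rw [hb] at h; exact absurd h (by simp)
      set a := (f y₀).toReal with ha
      have hfa : f y₀ = (a : EReal) := (EReal.coe_toReal ht hb).symm
      rw [hfa] at h ⊢
      have hsa : s₀ < a := by exact_mod_cast h
      exact ⟨(s₀ + a) / 2, by exact_mod_cast (by linarith : s₀ < (s₀ + a)/2),
        by exact_mod_cast (by linarith : (s₀ + a)/2 < a)⟩
  have hopen : IsOpen {y : X | (c : EReal) < f y} := by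
    have := lowerSemicontinuous_iff_isOpen_preimage.1 hl (c : EReal)
    exact this
  have : {y : X | (c : EReal) < f y} ×ˢ (Iio c) ∈ 𝓝 (y₀, s₀) :=
    prod_mem_nhds (hopen.mem_nhds hc2) (Iio_mem_nhds (by exact_mod_cast hc1))
  refine Filter.mem_of_superset this ?_
  rintro ⟨y, s⟩ ⟨hy, hs⟩
  simp only [mem_compl_iff, epiSet, mem_setOf_eq, not_le]
  calc (s : EReal) < (c : EReal) := by exact_mod_cast hs
  _ < f y := hy

lemma epiSet_convex {f : X → EReal} (hp : EProper f) (hc : EConvex f) :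
    Convex ℝ (epiSet f) := by
  rintro ⟨y, s⟩ hy ⟨y', s'⟩ hy' a b ha hb hab
  simp only [epiSet, mem_setOf_eq] at hy hy' ⊢
  obtain ⟨r, hr, hrs⟩ := real_of_le_coe hp hy
  obtain ⟨r', hr', hrs'⟩ := real_of_le_coe hp hy'
  have hb1 : b = 1 - a := by linarith
  have := hc y y' a ha (by linarith)
  rw [hr, hr', ← hb1] at this
  have heq : (a : EReal) * (r : EReal) + (b : EReal) * (r' : EReal)
      = ((a * r + b * r' : ℝ) : EReal) := by
    rw [← EReal.coe_mul, ← EReal.coe_mul, ← EReal.coe_add]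
  refine le_trans this ?_
  rw [heq]
  have : a * r + b * r' ≤ a * s + b * s' := by nlinarith
  exact_mod_cast this

/-- decompose a continuous linear functional on `E × ℝ`. -/
lemma prod_clm_eq {E : Type*} [AddCommGroup E] [Module ℝ E] [TopologicalSpace E]
    [IsTopologicalAddGroup E] [ContinuousSMul ℝ E]
    (Φ : (E × ℝ) →L[ℝ] ℝ) (y : E) (s : ℝ) :
    Φ (y, s) = Φ (y, 0) + s * Φ (0, 1) := by
  have : (y, s) = (y, (0:ℝ)) + s • ((0:E), (1:ℝ)) := by
    simp [Prod.ext_iff]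
  rw [this, map_add, map_smul, smul_eq_mul]

lemma minor_aux {f : X → EReal} (hp : EProper f) (hl : LowerSemicontinuous f) (hc : EConvex f)
    {z : X} {r : ℝ} (hzr : (z, r) ∉ epiSet f) :
    ∃ (Φ : (X × ℝ) →L[ℝ] ℝ) (u : ℝ), Φ (z, r) < u ∧ (∀ b ∈ epiSet f, u < Φ b) ∧
      0 ≤ Φ (0, 1) :=
  by
  obtain ⟨Φ, u, h1, h2⟩ := geometric_hahn_banach_point_closed
    (epiSet_convex hp hc) (epiSet_closed hl) hzr
  refine ⟨Φ, u, h1, h2, ?_⟩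
  by_contra hneg
  push_neg at hneg
  set c := Φ (0, 1) with hc'
  obtain ⟨x₁, hx₁⟩ := hp.2
  have hb₁ := hp.1 x₁
  set a₁ := (f x₁).toReal with ha₁
  have hfa₁ : f x₁ = (a₁ : EReal) := (EReal.coe_toReal hx₁ hb₁).symm
  set n := max 0 ((u - Φ (x₁, 0) - a₁ * c) / c) with hn
  have hmem : (x₁, a₁ + n) ∈ epiSet f := by
    simp only [epiSet, mem_setOf_eq, hfa₁]
    exact_mod_cast le_add_of_nonneg_right (le_max_left _ _)
  have := h2 _ hmem
  have heq : Φ (x₁, a₁ + n) = Φ (x₁, 0) + (a₁ + n) * c := by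
    have : ((x₁ : X), a₁ + n) = (x₁, (0:ℝ)) + (a₁ + n) • ((0:X), (1:ℝ)) := by
      simp [Prod.ext_iff]
    rw [this, map_add, map_smul, smul_eq_mul, hc']
  rw [heq] at this
  have hchain : n * c ≤ (u - Φ (x₁, 0) - a₁ * c) := by
    have h3 : (u - Φ (x₁, 0) - a₁ * c) / c ≤ n := le_max_right _ _
    calc n * c ≤ ((u - Φ (x₁, 0) - a₁ * c) / c) * c := by
          apply mul_le_mul_of_nonpos_right h3 hneg.le
    _ = u - Φ (x₁, 0) - a₁ * c := by
          rw [div_mul_cancel₀ _ (ne_of_lt hneg)]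
  nlinarith

lemma exists_minorPair {f : X → EReal} (hp : EProper f) (hl : LowerSemicontinuous f)
    (hc : EConvex f) : ∃ (q : WeakDual ℝ X) (γ : ℝ), MinorPair f q γ := by
  obtain ⟨x₁, hx₁⟩ := hp.2
  have hb₁ := hp.1 x₁
  set a₁ := (f x₁).toReal with ha₁
  have hfa₁ : f x₁ = (a₁ : EReal) := (EReal.coe_toReal hx₁ hb₁).symm
  have hout : (x₁, a₁ - 1) ∉ epiSet f := by
    simp only [epiSet, mem_setOf_eq, hfa₁, not_le]
    exact_mod_cast sub_one_lt a₁
  obtain ⟨Φ, u, h1, h2, _⟩ := minor_aux hp hl hc hout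
  set c := Φ (0, 1) with hc'
  have heq : ∀ (y : X) (s : ℝ), Φ (y, s) = Φ (y, 0) + s * c := by
    intro y s
    have : ((y : X), s) = (y, (0:ℝ)) + s • ((0:X), (1:ℝ)) := by simp [Prod.ext_iff]
    rw [this, map_add, map_smul, smul_eq_mul, hc']
  have hcpos : 0 < c := by
    have hm : (x₁, a₁) ∈ epiSet f := by simp [epiSet, hfa₁]
    have := h2 _ hm
    rw [heq x₁ a₁] at this
    rw [heq x₁ (a₁ - 1)] at h1
    nlinarith
  set ψ : WeakDual ℝ X := Φ.comp (ContinuousLinearMap.inl ℝ X ℝ) with hψ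
  have hψa : ∀ y : X, ψ y = Φ (y, 0) := fun y => rfl
  refine ⟨-(c⁻¹) • ψ, -(u / c), ?_⟩
  intro y
  rcases eq_or_ne (f y) ⊤ with ht | ht
  · rw [ht]; exact le_top
  · have hby := hp.1 y
    set b := (f y).toReal with hb
    have hfb : f y = (b : EReal) := (EReal.coe_toReal ht hby).symm
    have hmem : (y, b) ∈ epiSet f := by simp [epiSet, hfb]
    have h3 := h2 _ hmem
    rw [heq y b, ← hψa y] at h3
    rw [hfb]
    have happ : ((-(c⁻¹) • ψ : WeakDual ℝ X)) y = -(c⁻¹) * ψ y := rfl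
    rw [EReal.coe_le_coe_iff, happ]
    have : b > (u - ψ y) / c := by
      rw [gt_iff_lt, div_lt_iff₀ hcpos]; nlinarith
    calc -(c⁻¹) * ψ y - -(u / c) = (u - ψ y) / c := by field_simp; ring
    _ ≤ b := this.le

lemma minor_dense {f : X → EReal} (hp : EProper f) (hl : LowerSemicontinuous f)
    (hc : EConvex f) {z : X} {r : ℝ} (hzr : (r : EReal) < f z) :
    ∃ (q : WeakDual ℝ X) (γ : ℝ), MinorPair f q γ ∧ r < q z - γ := by
  have hout : (z, r) ∉ epiSet f := by simp only [epiSet, mem_setOf_eq, not_le]; exact hzr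
  obtain ⟨Φ, u, h1, h2, hcnn⟩ := minor_aux hp hl hc hout
  set c := Φ (0, 1) with hc'
  have heq : ∀ (y : X) (s : ℝ), Φ (y, s) = Φ (y, 0) + s * c := by
    intro y s
    have : ((y : X), s) = (y, (0:ℝ)) + s • ((0:X), (1:ℝ)) := by simp [Prod.ext_iff]
    rw [this, map_add, map_smul, smul_eq_mul, hc']
  set ψ : WeakDual ℝ X := Φ.comp (ContinuousLinearMap.inl ℝ X ℝ) with hψ
  have hψa : ∀ y : X, ψ y = Φ (y, 0) := fun y => rfl
  rcases lt_or_eq_of_le hcnn with hcpos | hczero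
  · -- c > 0
    refine ⟨-(c⁻¹) • ψ, -(u / c), ?_, ?_⟩
    · intro y
      rcases eq_or_ne (f y) ⊤ with ht | ht
      · rw [ht]; exact le_top
      · have hby := hp.1 y
        set b := (f y).toReal with hb
        have hfb : f y = (b : EReal) := (EReal.coe_toReal ht hby).symm
        have hmem : (y, b) ∈ epiSet f := by simp [epiSet, hfb]
        have h3 := h2 _ hmem
        rw [heq y b, ← hψa y] at h3
        rw [hfb]
        have happ : ((-(c⁻¹) • ψ : WeakDual ℝ X)) y = -(c⁻¹) * ψ y := rfl
        rw [EReal.coe_le_coe_iff, happ]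
        have : b > (u - ψ y) / c := by rw [gt_iff_lt, div_lt_iff₀ hcpos]; nlinarith
        calc -(c⁻¹) * ψ y - -(u / c) = (u - ψ y) / c := by field_simp; ring
        _ ≤ b := this.le
    · have happ : ((-(c⁻¹) • ψ : WeakDual ℝ X)) z = -(c⁻¹) * ψ z := rfl
      rw [happ]
      rw [heq z r, ← hψa z] at h1
      have : r < (u - ψ z) / c := by rw [lt_div_iff₀ hcpos]; nlinarith
      calc r < (u - ψ z) / c := this
      _ = -(c⁻¹) * ψ z - -(u / c) := by field_simp; ring
  · -- c = 0 : vertical case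
    obtain ⟨q₀, γ₀, hq₀⟩ := exists_minorPair hp hl hc
    have hψz : ψ z < u := by
      rw [heq z r, ← hψa z, ← hczero] at h1; linarith
    have hdom : ∀ y : X, f y ≠ ⊤ → u < ψ y := by
      intro y ht
      have hbx := hp.1 y
      have hfb : f y = (((f y).toReal : ℝ) : EReal) := (EReal.coe_toReal ht hbx).symm
      have hmem : (y, (f y).toReal) ∈ epiSet f := by
        simp only [epiSet, mem_setOf_eq]
        exact le_of_eq (EReal.coe_toReal ht hbx).symm
      have h3 := h2 _ hmem
      rw [heq, ← hψa y, ← hczero] at h3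
      linarith
    set A := q₀ z - γ₀ with hA
    set lam := max 0 ((r - A) / (u - ψ z)) + 1 with hlam
    have hupos : 0 < u - ψ z := by linarith
    have hlampos : 0 < lam := by positivity
    refine ⟨q₀ - lam • ψ, γ₀ - lam * u, ?_, ?_⟩
    · intro y
      rcases eq_or_ne (f y) ⊤ with ht | ht
      · rw [ht]; exact le_top
      · have hbx := hp.1 y
        set b := (f y).toReal with hb
        have hfb : f y = (b : EReal) := (EReal.coe_toReal ht hbx).symm
        have h4 := hq₀ y
        rw [hfb] at h4 ⊢
        rw [EReal.coe_le_coe_iff] at h4 ⊢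
        have happ : ((q₀ - lam • ψ : WeakDual ℝ X)) y = q₀ y - lam * ψ y := rfl
        rw [happ]
        have h5 := hdom y ht
        nlinarith
    · have happ : ((q₀ - lam • ψ : WeakDual ℝ X)) z = q₀ z - lam * ψ z := rfl
      rw [happ]
      have hge : (r - A) / (u - ψ z) ≤ max 0 ((r - A) / (u - ψ z)) := le_max_right _ _
      have h6 : (r - A) ≤ (max 0 ((r - A) / (u - ψ z))) * (u - ψ z) :=
        (div_le_iff₀ hupos).mp hge
      have h8 : lam * (u - ψ z) = (max 0 ((r - A) / (u - ψ z))) * (u - ψ z) + (u - ψ z) := by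
        rw [hlam]; ring
      have h7 : q₀ z - lam * ψ z - (γ₀ - lam * u) = A + lam * (u - ψ z) := by rw [hA]; ring
      rw [h7]
      have h9 : A + lam * (u - ψ z) = A + ((0 ⊔ (r - A) / (u - ψ z)) * (u - ψ z) + (u - ψ z)) := by
        rw [h8]
      rw [h9]
      linarith

lemma weakdual_clm_repr (φ : WeakDual ℝ X →L[ℝ] ℝ) : ∃ v : X, ∀ q : WeakDual ℝ X, φ q = q v := by
  classical
  set B := topDualPairing ℝ X with hB
  have hU : φ ⁻¹' (Metric.ball (0:ℝ) 1) ∈ 𝓝 (0 : WeakDual ℝ X) := by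
    have h0 : φ 0 = 0 := map_zero φ
    have := φ.continuous.continuousAt (x := (0 : WeakDual ℝ X))
    have hb : Metric.ball (0:ℝ) 1 ∈ 𝓝 (φ 0) := by
      rw [h0]; exact Metric.ball_mem_nhds _ one_pos
    exact this.preimage_mem_nhds hb
  obtain ⟨U, hU1, hU2⟩ := (LinearMap.hasBasis_weakBilin B).mem_iff.1 hU
  obtain ⟨s, r, hr, rfl⟩ := B.toSeminormFamily.basisSets_iff.1 hU1
  -- kernel inclusion
  have hker : ∀ q : WeakDual ℝ X, (∀ x ∈ s, q x = 0) → φ q = 0 := by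
    intro q hq
    by_contra hne
    set t : ℝ := 2 / |φ q| with ht
    have hφq : 0 < |φ q| := abs_pos.2 hne
    have htq : (t • q : WeakDual ℝ X) ∈ (s.sup B.toSeminormFamily).ball 0 r := by
      refine (Seminorm.mem_ball_zero _).2 ?_
      refine Seminorm.finset_sup_apply_lt hr ?_
      intro x hx
      show ‖t * q x‖ < r
      rw [hq x hx, mul_zero, norm_zero]
      exact hr
    have h5 : t • q ∈ φ ⁻¹' Metric.ball 0 1 := hU2 htq
    simp only [id, mem_preimage, Metric.mem_ball, dist_zero_right] at h5
    rw [map_smul, smul_eq_mul, norm_mul] at h5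
    have h6 : ‖t‖ * ‖φ q‖ = 2 := by
      rw [Real.norm_eq_abs, Real.norm_eq_abs, ht, abs_div, abs_two, abs_abs]
      field_simp
    rw [h6] at h5
    norm_num at h5
  -- linear algebra: φ is in the span of the evaluations
  set L : s → (WeakDual ℝ X) →ₗ[ℝ] ℝ := fun x => B.flip (x : X) with hL
  have hkerle : (⨅ i : s, LinearMap.ker (L i)) ≤ LinearMap.ker (φ : WeakDual ℝ X →ₗ[ℝ] ℝ) := by
    intro q hq
    rw [Submodule.mem_iInf] at hq
    rw [LinearMap.mem_ker]
    refine hker q fun x hx => ?_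
    have := hq ⟨x, hx⟩
    rwa [LinearMap.mem_ker] at this
  have hspan := mem_span_of_iInf_ker_le_ker hkerle
  rw [Submodule.mem_span_range_iff_exists_fun] at hspan
  obtain ⟨c, hc⟩ := hspan
  refine ⟨∑ i : s, c i • (i : X), fun q => ?_⟩
  have := congrFun (congrArg (fun (g : (WeakDual ℝ X) →ₗ[ℝ] ℝ) => (g : WeakDual ℝ X → ℝ)) hc) q
  simp only [LinearMap.coe_sum, Finset.sum_apply, LinearMap.smul_apply, smul_eq_mul] at this
  rw [ContinuousLinearMap.coe_coe] at this
  rw [← this]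
  rw [map_sum]
  refine Finset.sum_congr rfl fun i _ => ?_
  rw [map_smul, smul_eq_mul]
  rfl

lemma MinorPair.comb {f : X → EReal} (hpr : EProper f) {q q' : WeakDual ℝ X} {γ γ' a b : ℝ}
    (h : MinorPair f q γ) (h' : MinorPair f q' γ') (ha : 0 ≤ a) (hb : 0 ≤ b) (hab : a + b = 1) :
    MinorPair f (a • q + b • q') (a * γ + b * γ') := by
  intro y
  rcases eq_or_ne (f y) ⊤ with ht | ht
  · rw [ht]; exact le_top
  · have hbot := hpr.1 y
    have hfb : f y = (((f y).toReal : ℝ) : EReal) := (EReal.coe_toReal ht hbot).symm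
    have h1 := h y; have h2 := h' y
    rw [hfb] at h1 h2 ⊢
    rw [EReal.coe_le_coe_iff] at h1 h2 ⊢
    have happ : ((a • q + b • q' : WeakDual ℝ X)) y = a * q y + b * q' y := rfl
    rw [happ]
    have h3 : a * (f y).toReal + b * (f y).toReal = (f y).toReal := by
      rw [← add_mul, hab, one_mul]
    nlinarith [mul_le_mul_of_nonneg_left h1 ha, mul_le_mul_of_nonneg_left h2 hb, h3]

/-- Key biconjugation bound: if every sum of affine minorants is `≤ β` at `w`,
then `∑ fᵢ w ≤ β`. -/
lemma key_sum_le {m : ℕ} {f : Fin m → X → EReal} (hp : ∀ i, EProper (f i))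
    (hl : ∀ i, LowerSemicontinuous (f i)) (hc : ∀ i, EConvex (f i)) {w : X} {β : ℝ}
    (h : ∀ (q : Fin m → WeakDual ℝ X) (γ : Fin m → ℝ),
      (∀ i, MinorPair (f i) (q i) (γ i)) → ∑ i, (q i w - γ i) ≤ β) :
    ∑ i, f i w ≤ (β : EReal) := by
  classical
  choose q₀ γ₀ h₀ using fun i => exists_minorPair (hp i) (hl i) (hc i)
  -- no coordinate is ⊤ at w
  have htop : ∀ j, f j w ≠ ⊤ := by
    intro j hj
    set N : ℝ := β - ∑ i ∈ (Finset.univ.erase j), (q₀ i w - γ₀ i) with hN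
    have : ((N : ℝ) : EReal) < f j w := by rw [hj]; exact EReal.coe_lt_top N
    obtain ⟨q₁, γ₁, hm₁, hv₁⟩ := minor_dense (hp j) (hl j) (hc j) this
    set q : Fin m → WeakDual ℝ X := Function.update q₀ j q₁ with hq
    set γ : Fin m → ℝ := Function.update γ₀ j γ₁ with hγ
    have hmin : ∀ i, MinorPair (f i) (q i) (γ i) := by
      intro i
      rcases eq_or_ne i j with rfl | hij
      · rw [hq, hγ]; simpa using hm₁
      · rw [hq, hγ, Function.update_of_ne hij, Function.update_of_ne hij]; exact h₀ i
    have hsum := h q γ hmin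
    rw [← Finset.add_sum_erase _ _ (Finset.mem_univ j)] at hsum
    have he : ∑ i ∈ Finset.univ.erase j, (q i w - γ i) =
        ∑ i ∈ Finset.univ.erase j, (q₀ i w - γ₀ i) := by
      refine Finset.sum_congr rfl fun i hi => ?_
      have hij : i ≠ j := Finset.ne_of_mem_erase hi
      rw [hq, hγ, Function.update_of_ne hij, Function.update_of_ne hij]
    rw [he] at hsum
    have hqj : q j = q₁ := by rw [hq]; simp
    have hγj : γ j = γ₁ := by rw [hγ]; simp
    rw [hqj, hγj] at hsum
    rw [hN] at hv₁
    linarith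
  set a : Fin m → ℝ := fun i => (f i w).toReal with ha
  have hfa : ∀ i, f i w = ((a i : ℝ) : EReal) := fun i =>
    (EReal.coe_toReal (htop i) ((hp i).1 w)).symm
  have hsa : ∑ i, f i w = ((∑ i, a i : ℝ) : EReal) := by
    rw [myEReal_coe_finset_sum]
    exact Finset.sum_congr rfl fun i _ => hfa i
  rw [hsa, EReal.coe_le_coe_iff]
  have hstep : ∀ δ : ℝ, 0 < δ → ∑ i, a i ≤ β + (m : ℝ) * δ := by
    intro δ hδ
    have : ∀ i : Fin m, ∃ (qi : WeakDual ℝ X) (γi : ℝ),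
        MinorPair (f i) qi γi ∧ a i - δ < qi w - γi := by
      intro i
      refine minor_dense (hp i) (hl i) (hc i) ?_
      rw [hfa i]
      exact_mod_cast sub_lt_self (a i) hδ
    choose q γ hmin hval using this
    have hs := h q γ hmin
    have : ∑ i, (a i - δ) ≤ ∑ i, (q i w - γ i) :=
      Finset.sum_le_sum fun i _ => (hval i).le
    rw [Finset.sum_sub_distrib] at this
    simp only [Finset.sum_const, Finset.card_univ, Fintype.card_fin, nsmul_eq_mul] at this
    linarith
  by_contra hcon
  push_neg at hcon
  rcases Nat.eq_zero_or_pos m with rfl | hm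
  · simp at hcon
    have := h q₀ γ₀ h₀
    simp at this
    linarith
  · set δ := (∑ i, a i - β) / (2 * m) with hδ
    have hδpos : 0 < δ := by
      apply div_pos (by linarith) (by positivity)
    have := hstep δ hδpos
    rw [hδ] at this
    have hm' : (0:ℝ) < m := by exact_mod_cast hm
    have : (m : ℝ) * ((∑ i, a i - β) / (2 * m)) = (∑ i, a i - β)/2 := by
      field_simp
    nlinarith [hstep δ hδpos]

noncomputable instance : LocallyConvexSpace ℝ (WeakDual ℝ X) := WeakBilin.locallyConvexSpace

lemma eval_sum {m : ℕ} (g : Fin m → WeakDual ℝ X) (y : X) :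
    (∑ i, g i) y = ∑ i, g i y :=
  map_sum (AddMonoidHom.mk' (fun q : WeakDual ℝ X => q y) (fun _ _ => rfl)) _ _

lemma approx_decomp {m : ℕ} {f : Fin m → X → EReal} (hp : ∀ i, EProper (f i))
    (hl : ∀ i, LowerSemicontinuous (f i)) (hc : ∀ i, EConvex (f i)) {x : X}
    (hxt : ∀ i, f i x ≠ ⊤) {p : WeakDual ℝ X}
    (hkey : ∀ (w : X) (β : ℝ),
      (∀ (q : Fin m → WeakDual ℝ X) (γ : Fin m → ℝ),
        (∀ i, MinorPair (f i) (q i) (γ i)) → ∑ i, (q i w - γ i) ≤ β) →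
      p (w - x) + ∑ i, (f i x).toReal ≤ β)
    {V : Set (WeakDual ℝ X)} (hV : V ∈ 𝓝 p) {ε' : ℝ} (hε' : 0 < ε') :
    ∃ (q : Fin m → WeakDual ℝ X) (γ : Fin m → ℝ),
      (∀ i, MinorPair (f i) (q i) (γ i)) ∧ ∑ i, q i ∈ V ∧
      ∑ i, γ i < (p x - ∑ i, (f i x).toReal) + ε' := by
  classical
  set sa : ℝ := ∑ i, (f i x).toReal with hsa
  set s₀ : ℝ := p x - sa with hs₀
  by_contra hcon
  push_neg at hcon
  have hneg : ∀ (q : Fin m → WeakDual ℝ X) (γ : Fin m → ℝ),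
      (∀ i, MinorPair (f i) (q i) (γ i)) → ∑ i, q i ∈ V → s₀ + ε' ≤ ∑ i, γ i := by
    intro q γ hm hqV
    exact hcon q γ hm hqV
  set E : Set (WeakDual ℝ X × ℝ) := {z | ∃ (q : Fin m → WeakDual ℝ X) (γ : Fin m → ℝ),
    (∀ i, MinorPair (f i) (q i) (γ i)) ∧ ∑ i, q i = z.1 ∧ ∑ i, γ i ≤ z.2} with hE
  -- E is convex
  have hEconv : Convex ℝ E := by
    rintro ⟨z1, z2⟩ ⟨q, γ, hm, hq, hγ⟩ ⟨z1', z2'⟩ ⟨q', γ', hm', hq', hγ'⟩ a b ha hb hab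
    refine ⟨fun i => a • q i + b • q' i, fun i => a * γ i + b * γ' i,
      fun i => MinorPair.comb (hp i) (hm i) (hm' i) ha hb hab, ?_, ?_⟩
    · show ∑ i, (a • q i + b • q' i) = a • z1 + b • z1'
      rw [Finset.sum_add_distrib, ← Finset.smul_sum, ← Finset.smul_sum, hq, hq']
    · show ∑ i, (a * γ i + b * γ' i) ≤ a * z2 + b * z2'
      rw [Finset.sum_add_distrib, ← Finset.mul_sum, ← Finset.mul_sum]
      have := mul_le_mul_of_nonneg_left hγ ha
      have := mul_le_mul_of_nonneg_left hγ' hb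
      linarith
  -- base point of E
  choose q₀ γ₀ h₀ using fun i => exists_minorPair (hp i) (hl i) (hc i)
  have hbase : ∀ t : ℝ, 0 ≤ t → ((∑ i, q₀ i : WeakDual ℝ X), (∑ i, γ₀ i) + t) ∈ E :=
    fun t ht => ⟨q₀, γ₀, h₀, rfl, le_add_of_nonneg_right ht⟩
  -- the point to separate
  set r₀ : ℝ := s₀ + ε' / 2 with hr₀
  have hout : ((p, r₀) : WeakDual ℝ X × ℝ) ∉ closure E := by
    intro hin
    rw [mem_closure_iff_nhds] at hin
    have hnb : (V ×ˢ Ioo (r₀ - 1) (s₀ + ε')) ∈ 𝓝 ((p, r₀) : WeakDual ℝ X × ℝ) :=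
      prod_mem_nhds hV (Ioo_mem_nhds (by rw [hr₀]; linarith) (by rw [hr₀]; linarith))
    obtain ⟨⟨z1, z2⟩, ⟨hz1, hz2⟩, q, γ, hm, hq, hγ⟩ := hin _ hnb
    have := hneg q γ hm (by rw [hq]; exact hz1)
    have : s₀ + ε' ≤ z2 := le_trans this hγ
    exact absurd hz2.2 (not_lt.2 this)
  obtain ⟨Φ, u, hΦp, hΦE⟩ := geometric_hahn_banach_point_closed
    (hEconv.closure) isClosed_closure hout
  have hΦE' : ∀ z ∈ E, u < Φ z := fun z hz => hΦE z (subset_closure hz)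
  set c : ℝ := Φ (0, 1) with hcdef
  have heq : ∀ (z1 : WeakDual ℝ X) (z2 : ℝ), Φ (z1, z2) = Φ (z1, 0) + z2 * c := by
    intro z1 z2
    have : ((z1 : WeakDual ℝ X), z2) = (z1, (0:ℝ)) + z2 • ((0 : WeakDual ℝ X), (1:ℝ)) := by
      simp [Prod.ext_iff]
    rw [this, map_add, map_smul, smul_eq_mul, hcdef]
  obtain ⟨v, hv⟩ := weakdual_clm_repr (Φ.comp (ContinuousLinearMap.inl ℝ (WeakDual ℝ X) ℝ))
  have hv' : ∀ z1 : WeakDual ℝ X, Φ (z1, 0) = z1 v := fun z1 => hv z1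
  -- c ≥ 0
  have hcnn : 0 ≤ c := by
    by_contra hcneg
    push_neg at hcneg
    set S := (∑ i, q₀ i : WeakDual ℝ X) v with hS
    set G := ∑ i, γ₀ i with hG
    set t := max 0 ((u - S - G * c) / c) with ht
    have h1 := hΦE' _ (hbase t (le_max_left _ _))
    rw [heq, hv'] at h1
    have h2 : (u - S - G * c) / c ≤ t := le_max_right _ _
    have h3 : t * c ≤ u - S - G * c := by
      calc t * c ≤ ((u - S - G * c) / c) * c := mul_le_mul_of_nonpos_right h2 hcneg.le
      _ = u - S - G * c := by rw [div_mul_cancel₀ _ (ne_of_lt hcneg)]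
    nlinarith
  rcases lt_or_eq_of_le hcnn with hcpos | hczero
  · -- c > 0
    have hprem : ∀ (q : Fin m → WeakDual ℝ X) (γ : Fin m → ℝ),
        (∀ i, MinorPair (f i) (q i) (γ i)) → ∑ i, (q i ((-(c⁻¹)) • v) - γ i) ≤ -(u / c) := by
      intro q γ hm
      have h1 := hΦE' ((∑ i, q i : WeakDual ℝ X), (∑ i, γ i)) ⟨q, γ, hm, rfl, le_refl _⟩
      rw [heq, hv'] at h1
      have happ : ∀ i, q i ((-(c⁻¹)) • v) = -(c⁻¹) * q i v := fun i => map_smul (q i) _ _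
      have hsum : ∑ i, (q i ((-(c⁻¹)) • v) - γ i)
          = -(c⁻¹) * ((∑ i, q i : WeakDual ℝ X) v) - ∑ i, γ i := by
        rw [eval_sum, Finset.mul_sum, ← Finset.sum_sub_distrib]
        exact Finset.sum_congr rfl fun i _ => by rw [happ i]
      rw [hsum]
      set Sv := (∑ i, q i : WeakDual ℝ X) v
      set Sγ := ∑ i, γ i
      have hc0 : c ≠ 0 := ne_of_gt hcpos
      rw [← mul_le_mul_iff_right₀ hcpos]
      have e1 : c * (-(c⁻¹) * Sv - Sγ) = -Sv - c * Sγ := by field_simp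
      have e2 : c * -(u / c) = -u := by rw [mul_neg, mul_comm, div_mul_cancel₀ _ hc0]
      rw [e1, e2]
      linarith
    have hk := hkey _ _ hprem
    have hpw : p ((-(c⁻¹)) • v - x) = -(c⁻¹) * p v - p x := by
      rw [map_sub, map_smul]; rfl
    rw [hpw] at hk
    rw [heq, hv'] at hΦp
    -- hΦp : p v + r₀ * c < u
    have : -(c⁻¹) * p v - p x + sa ≤ -(u/c) := hk
    have hc0 : c ≠ 0 := ne_of_gt hcpos
    have hineq2 : -(p v) - c * (p x - sa) ≤ -u := by
      have := mul_le_mul_of_nonneg_left this hcpos.le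
      calc -(p v) - c * (p x - sa) = c * (-(c⁻¹) * p v - p x + sa) := by
            field_simp; ring
      _ ≤ c * (-(u/c)) := this
      _ = -u := by field_simp
    rw [hr₀] at hΦp
    nlinarith
  · -- c = 0 : vertical case
    have hdomlarge : ∀ (q : Fin m → WeakDual ℝ X) (γ : Fin m → ℝ),
        (∀ i, MinorPair (f i) (q i) (γ i)) → u < (∑ i, q i : WeakDual ℝ X) v := by
      intro q γ hm
      have h1 := hΦE' ((∑ i, q i : WeakDual ℝ X), (∑ i, γ i)) ⟨q, γ, hm, rfl, le_refl _⟩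
      rw [heq, hv', ← hczero] at h1
      linarith
    have hpv : p v < u := by
      rw [heq, hv', ← hczero] at hΦp
      linarith
    have hprem : ∀ (q : Fin m → WeakDual ℝ X) (γ : Fin m → ℝ),
        (∀ i, MinorPair (f i) (q i) (γ i)) → ∑ i, (q i (x - v) - γ i) ≤ sa - u := by
      intro q γ hm
      have hsplit : ∀ i, q i (x - v) - γ i = (q i x - γ i) - q i v := by
        intro i; rw [map_sub]; ring
      have hx : ∀ i, q i x - γ i ≤ (f i x).toReal := by
        intro i
        have h2 := hm i x
        have hfb : f i x = (((f i x).toReal : ℝ) : EReal) :=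
          (EReal.coe_toReal (hxt i) ((hp i).1 x)).symm
        rw [hfb, EReal.coe_le_coe_iff] at h2
        exact h2
      calc ∑ i, (q i (x - v) - γ i) = ∑ i, ((q i x - γ i) - q i v) :=
            Finset.sum_congr rfl fun i _ => hsplit i
      _ = (∑ i, (q i x - γ i)) - ∑ i, q i v := Finset.sum_sub_distrib _ _
      _ ≤ sa - u := by
            have h3 : ∑ i, (q i x - γ i) ≤ sa := Finset.sum_le_sum fun i _ => hx i
            have h4 := hdomlarge q γ hm
            rw [eval_sum] at h4
            linarith
    have hk := hkey _ _ hprem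
    have hpw : p (x - v - x) = -(p v) := by rw [map_sub, map_sub]; ring
    rw [hpw] at hk
    linarith

theorem stmt14 {X : Type*} [NormedAddCommGroup X] [NormedSpace ℝ X] [CompleteSpace X]
    {m : ℕ} (hm : 1 ≤ m) (f : Fin m → X → EReal)
    (hp : ∀ i, EProper (f i)) (hl : ∀ i, LowerSemicontinuous (f i)) (hc : ∀ i, EConvex (f i))
    (hdom : (⋂ i, edom (f i)).Nonempty)
    (hK : ∃ K > (0 : ℝ), ∀ x ∈ ⋂ i, edom (f i), ∀ ε > (0 : ℝ),
      closure (∑ i, epsSubdiff (f i) ε x) ⊆ ∑ i, epsSubdiff (f i) (K * ε) x) :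
    ∀ x : X, subdiff (fun y => ∑ i, f i y) x =
      ⋂ η ∈ Set.Ioi (0 : ℝ), ∑ i, epsSubdiff (f i) η x := by
  classical
  obtain ⟨K, hK0, hKP⟩ := hK
  intro x
  have hm0 : (0 : ℝ) < m := by exact_mod_cast hm
  ext p
  simp only [Set.mem_iInter, Set.mem_Ioi]
  constructor
  · -- hard direction
    rintro ⟨hFt, hFb, hFle⟩ η hη
    have hFle' : ∀ y : X, (p (y - x) : EReal) + ∑ i, f i x ≤ ∑ i, f i y := by
      intro y
      have := hFle y
      simpa using this
    have hxt : ∀ i, f i x ≠ ⊤ := by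
      intro i hi
      exact hFt (myEReal_sum_eq_top (fun j _ => (hp j).1 x) (Finset.mem_univ i) hi)
    set a : Fin m → ℝ := fun i => (f i x).toReal with ha
    have hfa : ∀ i, f i x = ((a i : ℝ) : EReal) := fun i =>
      (EReal.coe_toReal (hxt i) ((hp i).1 x)).symm
    set sa : ℝ := ∑ i, a i with hsa
    have hFx : ∑ i, f i x = ((sa : ℝ) : EReal) := by
      rw [hsa, myEReal_coe_finset_sum]
      exact Finset.sum_congr rfl fun i _ => hfa i
    have hxdom : x ∈ ⋂ i, edom (f i) := by
      rw [Set.mem_iInter]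
      intro i
      exact lt_top_iff_ne_top.2 (hxt i)
    have hkey : ∀ (w : X) (β : ℝ),
        (∀ (q : Fin m → WeakDual ℝ X) (γ : Fin m → ℝ),
          (∀ i, MinorPair (f i) (q i) (γ i)) → ∑ i, (q i w - γ i) ≤ β) →
        p (w - x) + sa ≤ β := by
      intro w β hβ
      have h1 := key_sum_le hp hl hc hβ
      have h2 := hFle' w
      rw [hFx] at h2
      have h3 : ((p (w - x) + sa : ℝ) : EReal) ≤ (β : EReal) := by
        rw [EReal.coe_add]
        exact le_trans h2 h1
      exact_mod_cast h3
    set ε : ℝ := η / K with hε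
    have hεpos : 0 < ε := div_pos hη hK0
    have hclos : p ∈ closure (∑ i, epsSubdiff (f i) ε x) := by
      rw [mem_closure_iff_nhds]
      intro W hW
      set δ : ℝ := ε / 2 with hδ
      have hδpos : 0 < δ := by rw [hδ]; linarith
      have hOnhds : {q : WeakDual ℝ X | |q x - p x| < δ} ∈ 𝓝 p := by
        have hcont : Continuous fun q : WeakDual ℝ X => q x :=
          WeakBilin.eval_continuous (topDualPairing ℝ X) x
        have : {q : WeakDual ℝ X | |q x - p x| < δ}
            = (fun q : WeakDual ℝ X => q x) ⁻¹' (Metric.ball (p x) δ) := by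
          ext q
          simp [Metric.mem_ball, Real.dist_eq]
        rw [this]
        exact hcont.continuousAt.preimage_mem_nhds (Metric.ball_mem_nhds _ hδpos)
      have hV : W ∩ {q : WeakDual ℝ X | |q x - p x| < δ} ∈ 𝓝 p := Filter.inter_mem hW hOnhds
      obtain ⟨q, γ, hmin, hqV, hγs⟩ := approx_decomp hp hl hc hxt hkey hV
        (show (0:ℝ) < ε/2 by linarith)
      set εi : Fin m → ℝ := fun i => γ i + a i - q i x with hεidef
      have hεinn : ∀ i, 0 ≤ εi i := by
        intro i
        have h2 := hmin i x
        rw [hfa i, EReal.coe_le_coe_iff] at h2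
        rw [hεidef]
        simp only
        linarith
      have hqxd : |(∑ i, q i : WeakDual ℝ X) x - p x| < δ := hqV.2
      have hsumεi : ∑ i, εi i < ε := by
        have he : ∑ i, εi i = ∑ i, γ i + sa - (∑ i, q i : WeakDual ℝ X) x := by
          rw [eval_sum, hεidef, hsa]
          rw [Finset.sum_sub_distrib, Finset.sum_add_distrib]
        rw [he]
        have habs : (∑ i, q i : WeakDual ℝ X) x - p x > -δ := neg_lt_of_abs_lt hqxd
        have : ∑ i, γ i < p x - sa + ε / 2 := hγs
        linarith
      have hmem : ∀ i, q i ∈ epsSubdiff (f i) ε x := by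
        intro i
        refine ⟨hxt i, (hp i).1 x, fun y => ?_⟩
        have hminy := hmin i y
        have hbound : εi i ≤ ε :=
          le_trans (Finset.single_le_sum (fun j _ => hεinn j) (Finset.mem_univ i)) hsumεi.le
        have hql : q i (y - x) = q i y - q i x := map_sub _ _ _
        rw [hfa i, hql]
        calc ((q i y - q i x : ℝ) : EReal) + ((a i : ℝ) : EReal)
            = ((q i y - q i x + a i : ℝ) : EReal) := by rw [EReal.coe_add]
        _ ≤ ((q i y - γ i + ε : ℝ) : EReal) := by
            rw [EReal.coe_le_coe_iff]
            have : εi i = γ i + a i - q i x := rfl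
            linarith
        _ = ((q i y - γ i : ℝ) : EReal) + (ε : EReal) := by rw [EReal.coe_add]
        _ ≤ f i y + (ε : EReal) := add_le_add_left hminy _
      refine ⟨∑ i, q i, hqV.1, ?_⟩
      rw [mem_finsetSum_sets]
      exact ⟨q, fun i _ => hmem i, rfl⟩
    have := hKP x hxdom ε hεpos hclos
    have hKε : K * ε = η := by
      rw [hε]; field_simp
    rwa [hKε] at this
  · -- easy direction
    intro hmem
    have hdec : ∀ η : ℝ, 0 < η → ∃ g : Fin m → WeakDual ℝ X,
        (∀ i, g i ∈ epsSubdiff (f i) η x) ∧ ∑ i, g i = p := by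
      intro η hη
      have := hmem η hη
      rw [mem_finsetSum_sets] at this
      obtain ⟨g, hg, hgs⟩ := this
      exact ⟨g, fun i => hg i (Finset.mem_univ i), hgs⟩
    obtain ⟨g1, hg1, -⟩ := hdec 1 one_pos
    have hxt : ∀ i, f i x ≠ ⊤ := fun i => (hg1 i).1
    have hxb : ∀ i, f i x ≠ ⊥ := fun i => (hg1 i).2.1
    have hFt : ∑ i, f i x ≠ ⊤ := by
      set a : Fin m → ℝ := fun i => (f i x).toReal with ha
      have hfa : ∀ i, f i x = ((a i : ℝ) : EReal) := fun i =>
        (EReal.coe_toReal (hxt i) (hxb i)).symm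
      have : ∑ i, f i x = ((∑ i, a i : ℝ) : EReal) := by
        rw [myEReal_coe_finset_sum]
        exact Finset.sum_congr rfl fun i _ => hfa i
      rw [this]
      exact EReal.coe_ne_top _
    have hFb : ∑ i, f i x ≠ ⊥ := myEReal_sum_ne_bot fun i _ => hxb i
    refine ⟨hFt, hFb, fun y => ?_⟩
    have hgoal : (p (y - x) : EReal) + ∑ i, f i x ≤ ∑ i, f i y := by
      apply myEReal_le_of_forall_le_add
      intro η hη
      set θ : ℝ := η / m with hθ
      have hθpos : 0 < θ := div_pos hη hm0
      obtain ⟨g, hg, hgs⟩ := hdec θ hθpos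
      have hsum : ∑ i, ((g i (y - x) : EReal) + f i x) ≤ ∑ i, (f i y + (θ : EReal)) :=
        Finset.sum_le_sum fun i _ => (hg i).2.2 y
      have hL : ∑ i, ((g i (y - x) : EReal) + f i x)
          = (p (y - x) : EReal) + ∑ i, f i x := by
        rw [Finset.sum_add_distrib, ← myEReal_coe_finset_sum, ← eval_sum, hgs]
      have hR : ∑ i, (f i y + (θ : EReal)) = ∑ i, f i y + (η : EReal) := by
        rw [Finset.sum_add_distrib]
        congr 1
        rw [← myEReal_coe_finset_sum]
        norm_cast
        rw [Finset.sum_const, Finset.card_univ, Fintype.card_fin, nsmul_eq_mul, hθ]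
        field_simp
      rw [hL, hR] at hsum
      exact hsum
    simpa using hgoal
end
end

section
/- Let H be an infinite-dimensional real Hilbert space with orthonormal sequence (e_n)_{n≥0}, let C be the closed linear span of {e_{2n}} and D the closed linear span of {cos(θ_n) e_{2n} + sin(θ_n) e_{2n+1}}, where θ_n ∈ (0, π/2] and ∑ sin²(θ_n) < ∞. Set f := ι_{C^⊥} and g := ι_{D^⊥}. Then for every x ∈ dom f ∩ dom g, ∂(f+g)(x) ≠ ⋂_{η>0} [ ∂_η f(x) + ∂_η g(x) ], since the right-hand side equals C + D, which is not closed. -/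
open Pointwise Topology Set

noncomputable section

variable {X : Type*} [NormedAddCommGroup X] [NormedSpace ℝ X]

section Aux

set_option linter.unusedSectionVars false

variable {H : Type*} [NormedAddCommGroup H] [InnerProductSpace ℝ H] [CompleteSpace H]

/-- Riesz map into the weak dual. -/
def toW (v : H) : WeakDual ℝ H := InnerProductSpace.toDual ℝ H v

lemma toW_apply (v y : H) : toW v y = (inner ℝ v y : ℝ) := InnerProductSpace.toDual_apply_apply

lemma fromW (p : WeakDual ℝ H) : ∃ v : H, toW v = p :=
  ⟨(InnerProductSpace.toDual ℝ H).symm p, (InnerProductSpace.toDual ℝ H).apply_symm_apply p⟩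

lemma aux_vanish (K : Submodule ℝ H) (p : WeakDual ℝ H) (η : ℝ)
    (h : ∀ z ∈ K, p z ≤ η) : ∀ z ∈ K, p z = 0 := by
  intro z hz
  by_contra hne
  have h2 := h (((η + 1) / (p z)) • z) (K.smul_mem _ hz)
  have hps : p (((η + 1) / (p z)) • z) = (η + 1) / (p z) * p z := map_smul p _ z
  rw [hps, div_mul_cancel₀ _ hne] at h2
  linarith

lemma aux_orth_closure (K : Submodule ℝ H) : (K.topologicalClosure)ᗮ = Kᗮ := by
  refine le_antisymm (Submodule.orthogonal_le K.le_topologicalClosure) ?_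
  intro z hz
  rw [Submodule.mem_orthogonal] at hz ⊢
  intro u hu
  have hsub : (K : Set H) ⊆ {u : H | (inner ℝ u z : ℝ) = 0} := fun u hu => hz u hu
  have hcl : IsClosed {u : H | (inner ℝ u z : ℝ) = 0} :=
    isClosed_eq (Continuous.inner continuous_id continuous_const) continuous_const
  have : (K.topologicalClosure : Set H) ⊆ {u : H | (inner ℝ u z : ℝ) = 0} := by
    rw [Submodule.topologicalClosure_coe]
    exact closure_minimal hsub hcl
  exact this hu

lemma aux_mem_orth_span (S : Set H) (z : H) (h : ∀ s ∈ S, (inner ℝ s z : ℝ) = 0) :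
    z ∈ ((Submodule.span ℝ S).topologicalClosure)ᗮ := by
  rw [aux_orth_closure, Submodule.mem_orthogonal]
  intro u hu
  induction hu using Submodule.span_induction with
  | mem x hx => exact h x hx
  | zero => simp
  | add x y _ _ hx hy => rw [inner_add_left, hx, hy, add_zero]
  | smul t x _ hx => rw [inner_smul_left, hx, mul_zero]

lemma aux_inner_closure_zero (C D : Submodule ℝ H) (v0 : H)
    (hv0cl : v0 ∈ closure ((C : Set H) + (D : Set H))) (z : H) (hzC : z ∈ Cᗮ) (hzD : z ∈ Dᗮ) :
    (inner ℝ v0 z : ℝ) = 0 := by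
  have hsub : (C : Set H) + (D : Set H) ⊆ {v : H | (inner ℝ v z : ℝ) = 0} := by
    rintro a ha
    rw [Set.mem_add] at ha
    obtain ⟨c, hc, d, hd, rfl⟩ := ha
    simp only [Set.mem_setOf_eq, inner_add_left]
    rw [Submodule.inner_right_of_mem_orthogonal hc hzC,
      Submodule.inner_right_of_mem_orthogonal hd hzD, add_zero]
  have hcl : IsClosed {v : H | (inner ℝ v z : ℝ) = 0} :=
    isClosed_eq (Continuous.inner continuous_id continuous_const) continuous_const
  exact closure_minimal hsub hcl hv0cl

set_option maxHeartbeats 1000000 in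
lemma aux_main (e : ℕ → H) (he : Orthonormal ℝ e)
    (θ : ℕ → ℝ) (hθ : ∀ n, θ n ∈ Set.Ioc 0 (Real.pi / 2))
    (hsum : Summable fun n => Real.sin (θ n) ^ 2)
    (C D : Submodule ℝ H)
    (hC : C = (Submodule.span ℝ (Set.range fun n => e (2 * n))).topologicalClosure)
    (hD : D = (Submodule.span ℝ (Set.range fun n =>
      Real.cos (θ n) • e (2 * n) + Real.sin (θ n) • e (2 * n + 1))).topologicalClosure) :
    ∃ v0 : H, v0 ∈ closure ((C : Set H) + (D : Set H)) ∧ v0 ∉ (C : Set H) + (D : Set H) := by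
  have hee : ∀ a b, (inner ℝ (e a) (e b) : ℝ) = if a = b then 1 else 0 :=
    orthonormal_iff_ite.mp he
  set w : ℕ → H := fun n => Real.cos (θ n) • e (2 * n) + Real.sin (θ n) • e (2 * n + 1) with hwdef
  set z : ℕ → H := fun n => (-Real.sin (θ n)) • e (2 * n) + Real.cos (θ n) • e (2 * n + 1)
    with hzdef
  have hsin0 : ∀ n, Real.sin (θ n) ≠ 0 := fun n =>
    (Real.sin_pos_of_pos_of_lt_pi (hθ n).1
      (lt_of_le_of_lt (hθ n).2 (by linarith [Real.pi_pos]))).ne'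
  have hwij : ∀ i j, (inner ℝ (w i) (w j) : ℝ) = if i = j then 1 else 0 := by
    intro i j
    simp only [hwdef, inner_add_left, inner_add_right, real_inner_smul_left,
      real_inner_smul_right, hee]
    rcases eq_or_ne i j with rfl | hij
    · simp only [if_pos rfl, if_neg (show 2*i ≠ 2*i+1 by omega),
        if_neg (show 2*i+1 ≠ 2*i by omega)]
      norm_num
      have := Real.sin_sq_add_cos_sq (θ i)
      nlinarith [this]
    · simp only [if_neg (show 2*i ≠ 2*j by omega), if_neg (show 2*i ≠ 2*j+1 by omega),
        if_neg (show 2*i+1 ≠ 2*j by omega), if_neg (show 2*i+1 ≠ 2*j+1 by omega),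
        if_neg hij]
      ring
  have hw : Orthonormal ℝ w := orthonormal_iff_ite.mpr hwij
  have hwz : ∀ m n, (inner ℝ (w m) (z n) : ℝ) = 0 := by
    intro m n
    simp only [hwdef, hzdef, inner_add_left, inner_add_right, real_inner_smul_left,
      real_inner_smul_right, hee]
    rcases eq_or_ne m n with rfl | hmn
    · simp only [if_pos rfl, if_neg (show 2*m ≠ 2*m+1 by omega),
        if_neg (show 2*m+1 ≠ 2*m by omega)]
      norm_num; ring
    · simp only [if_neg (show 2*m ≠ 2*n by omega), if_neg (show 2*m ≠ 2*n+1 by omega),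
        if_neg (show 2*m+1 ≠ 2*n by omega), if_neg (show 2*m+1 ≠ 2*n+1 by omega)]
      ring
  have hzD : ∀ n, z n ∈ Dᗮ := by
    intro n
    rw [hD]
    exact aux_mem_orth_span _ _ (by rintro s ⟨m, rfl⟩; exact hwz m n)
  have heoddC : ∀ n, e (2 * n + 1) ∈ Cᗮ := by
    intro n
    rw [hC]
    refine aux_mem_orth_span _ _ ?_
    rintro s ⟨m, rfl⟩
    rw [hee, if_neg (by omega)]
  have hid : ∀ n, e (2 * n + 1) = Real.sin (θ n) • w n + Real.cos (θ n) • z n := by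
    intro n
    have h1 : Real.sin (θ n) * Real.cos (θ n) + Real.cos (θ n) * (-Real.sin (θ n)) = 0 := by ring
    have h2 : Real.sin (θ n) * Real.sin (θ n) + Real.cos (θ n) * Real.cos (θ n) = 1 := by
      have := Real.sin_sq_add_cos_sq (θ n); nlinarith [this]
    simp only [hwdef, hzdef, smul_add, smul_smul]
    rw [add_add_add_comm, ← add_smul, ← add_smul, h1, h2, zero_smul, one_smul, zero_add]
  have hodd : Orthonormal ℝ (fun n => e (2 * n + 1)) :=
    he.comp (fun n => 2 * n + 1) (fun a b h => by simp only at h; omega)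
  have hsummable : Summable (fun n => Real.sin (θ n) • e (2 * n + 1)) := by
    have h2 := hodd.orthogonalFamily.summable_iff_norm_sq_summable
      (fun n => Real.sin (θ n))
    simp only [LinearIsometry.toSpanSingleton_apply, Real.norm_eq_abs, sq_abs] at h2
    exact h2.mpr hsum
  set v0 : H := ∑' n, Real.sin (θ n) • e (2 * n + 1) with hv0def
  have hv0 : HasSum (fun n => Real.sin (θ n) • e (2 * n + 1)) v0 := hsummable.hasSum
  have hinner_v0 : ∀ n, (inner ℝ (e (2 * n + 1)) v0 : ℝ) = Real.sin (θ n) := by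
    intro n
    have h1 : HasSum (fun k => (inner ℝ (e (2 * n + 1)) (Real.sin (θ k) • e (2 * k + 1)) : ℝ))
        (inner ℝ (e (2 * n + 1)) v0 : ℝ) := hv0.mapL (innerSL ℝ (e (2 * n + 1)))
    have h2 : (fun k => (inner ℝ (e (2 * n + 1)) (Real.sin (θ k) • e (2 * k + 1)) : ℝ)) =
        fun k => if k = n then Real.sin (θ n) else 0 := by
      funext k
      rw [real_inner_smul_right, hee]
      rcases eq_or_ne k n with rfl | hkn
      · simp
      · rw [if_neg (by omega), if_neg hkn, mul_zero]
    rw [h2] at h1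
    exact h1.unique (hasSum_ite_eq n (Real.sin (θ n)))
  refine ⟨v0, ?_, ?_⟩
  · have hterm : ∀ n, Real.sin (θ n) • e (2 * n + 1) =
        (-(Real.cos (θ n))) • e (2 * n) + w n := by
      intro n; simp only [hwdef, neg_smul]; abel
    have hmem : ∀ N, (∑ n ∈ Finset.range N, Real.sin (θ n) • e (2 * n + 1)) ∈
        (C : Set H) + (D : Set H) := by
      intro N
      rw [Set.mem_add]
      refine ⟨∑ n ∈ Finset.range N, (-(Real.cos (θ n))) • e (2 * n), ?_,
        ∑ n ∈ Finset.range N, w n, ?_, ?_⟩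
      · exact Submodule.sum_mem C (fun n _ => Submodule.smul_mem C _
          (hC ▸ (Submodule.le_topologicalClosure _ (Submodule.subset_span ⟨n, rfl⟩))))
      · exact Submodule.sum_mem D (fun n _ =>
          hD ▸ (Submodule.le_topologicalClosure _ (Submodule.subset_span ⟨n, rfl⟩)))
      · rw [← Finset.sum_add_distrib]
        exact (Finset.sum_congr rfl fun n _ => (hterm n).symm)
    exact mem_closure_of_tendsto hv0.tendsto_sum_nat
      (Filter.Eventually.of_forall hmem)
  · rintro hv0mem
    rw [Set.mem_add] at hv0mem
    obtain ⟨c, hc, d, hd, hcd⟩ := hv0mem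
    have ha : ∀ n, (inner ℝ (w n) d : ℝ) = 1 := by
      intro n
      have h0 : (inner ℝ (e (2 * n + 1)) c : ℝ) = 0 :=
        Submodule.inner_left_of_mem_orthogonal hc (heoddC n)
      have hz0 : (inner ℝ (z n) d : ℝ) = 0 :=
        Submodule.inner_left_of_mem_orthogonal hd (hzD n)
      have h3 : (inner ℝ (e (2 * n + 1)) d : ℝ) = Real.sin (θ n) * (inner ℝ (w n) d : ℝ) := by
        conv_lhs => rw [hid n]
        rw [inner_add_left, real_inner_smul_left, real_inner_smul_left, hz0, mul_zero, add_zero]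
      have h4 : Real.sin (θ n) = Real.sin (θ n) * (inner ℝ (w n) d : ℝ) := by
        rw [← h3]
        have h5 := hinner_v0 n
        rw [← hcd, inner_add_right, h0, zero_add] at h5
        exact h5.symm
      exact (mul_left_cancel₀ (hsin0 n) (by rw [← h4, mul_one])).symm
    have hbessel : Summable fun n => ‖(inner ℝ (w n) d : ℝ)‖ ^ 2 :=
      hw.inner_products_summable d
    rw [show (fun n => ‖(inner ℝ (w n) d : ℝ)‖ ^ 2) = fun _ => (1:ℝ) by
      funext n; rw [ha n]; norm_num] at hbessel
    have := hbessel.tendsto_atTop_zero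
    have h1 : (1 : ℝ) = 0 := tendsto_nhds_unique tendsto_const_nhds this
    norm_num at h1

end Aux

open scoped Classical in
theorem stmt15 {H : Type*} [NormedAddCommGroup H] [InnerProductSpace ℝ H] [CompleteSpace H]
    (hinf : ¬ FiniteDimensional ℝ H)
    (e : ℕ → H) (he : Orthonormal ℝ e)
    (θ : ℕ → ℝ) (hθ : ∀ n, θ n ∈ Set.Ioc 0 (Real.pi / 2))
    (hsum : Summable fun n => Real.sin (θ n) ^ 2)
    (C D : Submodule ℝ H)
    (hC : C = (Submodule.span ℝ (Set.range fun n => e (2 * n))).topologicalClosure)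
    (hD : D = (Submodule.span ℝ (Set.range fun n =>
      Real.cos (θ n) • e (2 * n) + Real.sin (θ n) • e (2 * n + 1))).topologicalClosure)
    (f g : H → EReal)
    (hf : f = fun x => if x ∈ Cᗮ then (0 : EReal) else ⊤)
    (hg : g = fun x => if x ∈ Dᗮ then (0 : EReal) else ⊤) :
    (∀ x ∈ edom f ∩ edom g,
      (⋂ η ∈ Set.Ioi (0 : ℝ), epsSubdiff f η x + epsSubdiff g η x) =
        {p : WeakDual ℝ H | ∃ v ∈ (C : Set H) + (D : Set H), ∀ y, p y = (inner ℝ v y : ℝ)} ∧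
      subdiff (fun y => f y + g y) x ≠
        ⋂ η ∈ Set.Ioi (0 : ℝ), epsSubdiff f η x + epsSubdiff g η x) ∧
    ¬ IsClosed ((C : Set H) + (D : Set H)) := by
  obtain ⟨v0, hv0cl, hv0n⟩ := aux_main e he θ hθ hsum C D hC hD
  have hCC : Cᗮᗮ = C := by
    conv_rhs => rw [hC]
    rw [Submodule.orthogonal_orthogonal_eq_closure, hC]
    exact (Submodule.isClosed_topologicalClosure _).submodule_topologicalClosure_eq
  have hDD : Dᗮᗮ = D := by
    conv_rhs => rw [hD]
    rw [Submodule.orthogonal_orthogonal_eq_closure, hD]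
    exact (Submodule.isClosed_topologicalClosure _).submodule_topologicalClosure_eq
  constructor
  · intro x hx
    have hxC : x ∈ Cᗮ := by
      by_contra h
      have := hx.1
      simp only [edom, Set.mem_setOf_eq, hf, h, if_false] at this
      exact lt_irrefl _ this
    have hxD : x ∈ Dᗮ := by
      by_contra h
      have := hx.2
      simp only [edom, Set.mem_setOf_eq, hg, h, if_false] at this
      exact lt_irrefl _ this
    have fx0 : f x = 0 := by rw [hf]; simp [hxC]
    have gx0 : g x = 0 := by rw [hg]; simp [hxD]
    -- the key characterization of the intersection
    have hmain : (⋂ η ∈ Set.Ioi (0 : ℝ), epsSubdiff f η x + epsSubdiff g η x) =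
        {p : WeakDual ℝ H | ∃ v ∈ (C : Set H) + (D : Set H), ∀ y, p y = (inner ℝ v y : ℝ)} := by
      ext p
      simp only [Set.mem_setOf_eq]
      constructor
      · intro hp
        have h1 := Set.mem_iInter₂.mp hp 1 (by norm_num)
        rw [Set.mem_add] at h1
        obtain ⟨p1, hp1, p2, hp2, hpsum⟩ := h1
        have hb1 : ∀ z ∈ Cᗮ, p1 z ≤ 1 := by
          intro z hz
          have h := hp1.2.2 (z + x)
          have hf2 : f (z + x) = 0 := by rw [hf]; simp [Cᗮ.add_mem hz hxC]
          rw [fx0, hf2, add_sub_cancel_right, add_zero, zero_add] at h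
          exact_mod_cast h
        have hb2 : ∀ z ∈ Dᗮ, p2 z ≤ 1 := by
          intro z hz
          have h := hp2.2.2 (z + x)
          have hg2 : g (z + x) = 0 := by rw [hg]; simp [Dᗮ.add_mem hz hxD]
          rw [gx0, hg2, add_sub_cancel_right, add_zero, zero_add] at h
          exact_mod_cast h
        have hz1 := aux_vanish Cᗮ p1 1 hb1
        have hz2 := aux_vanish Dᗮ p2 1 hb2
        obtain ⟨v1, hv1⟩ := fromW p1
        obtain ⟨v2, hv2⟩ := fromW p2
        have hv1C : v1 ∈ C := by
          rw [← hCC, Submodule.mem_orthogonal]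
          intro u hu
          rw [real_inner_comm, ← toW_apply, hv1]
          exact hz1 u hu
        have hv2D : v2 ∈ D := by
          rw [← hDD, Submodule.mem_orthogonal]
          intro u hu
          rw [real_inner_comm, ← toW_apply, hv2]
          exact hz2 u hu
        refine ⟨v1 + v2, Set.mem_add.mpr ⟨v1, hv1C, v2, hv2D, rfl⟩, fun y => ?_⟩
        rw [← hpsum]
        show p1 y + p2 y = _
        rw [← hv1, ← hv2, toW_apply, toW_apply, inner_add_left]
      · rintro ⟨v, hv, hpv⟩
        rw [Set.mem_add] at hv
        obtain ⟨v1, hv1, v2, hv2, rfl⟩ := hv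
        refine Set.mem_iInter₂.mpr fun η hη => ?_
        rw [Set.mem_add]
        have hmemf : toW v1 ∈ epsSubdiff f η x := by
          refine ⟨by simp [fx0], by simp [fx0], fun y => ?_⟩
          rw [fx0, add_zero]
          by_cases hy : y ∈ Cᗮ
          · have hfy : f y = 0 := by rw [hf]; simp [hy]
            rw [hfy, zero_add]
            have h0 : toW v1 (y - x) = 0 := by
              rw [toW_apply]
              exact Submodule.inner_right_of_mem_orthogonal hv1 (Cᗮ.sub_mem hy hxC)
            rw [h0]
            exact_mod_cast le_of_lt hη
          · have hfy : f y = ⊤ := by rw [hf]; simp [hy]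
            rw [hfy]
            rw [EReal.top_add_coe]
            exact le_top
        have hmemg : toW v2 ∈ epsSubdiff g η x := by
          refine ⟨by simp [gx0], by simp [gx0], fun y => ?_⟩
          rw [gx0, add_zero]
          by_cases hy : y ∈ Dᗮ
          · have hgy : g y = 0 := by rw [hg]; simp [hy]
            rw [hgy, zero_add]
            have h0 : toW v2 (y - x) = 0 := by
              rw [toW_apply]
              exact Submodule.inner_right_of_mem_orthogonal hv2 (Dᗮ.sub_mem hy hxD)
            rw [h0]
            exact_mod_cast le_of_lt hη
          · have hgy : g y = ⊤ := by rw [hg]; simp [hy]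
            rw [hgy]
            rw [EReal.top_add_coe]
            exact le_top
        refine ⟨toW v1, hmemf, toW v2, hmemg, ?_⟩
        apply DFunLike.ext
        intro y
        show toW v1 y + toW v2 y = p y
        rw [toW_apply, toW_apply, hpv, ← inner_add_left]
    refine ⟨hmain, ?_⟩
    rw [hmain]
    intro heq
    have hmem : toW v0 ∈ subdiff (fun y => f y + g y) x := by
      refine ⟨by simp [fx0, gx0], by simp [fx0, gx0], fun y => ?_⟩
      show ((toW v0 (y - x) : ℝ) : EReal) + (f x + g x) ≤ f y + g y + ((0:ℝ) : EReal)
      rw [fx0, gx0]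
      by_cases hyC : y ∈ Cᗮ
      · by_cases hyD : y ∈ Dᗮ
        · have hfy : f y = 0 := by rw [hf]; simp [hyC]
          have hgy : g y = 0 := by rw [hg]; simp [hyD]
          rw [hfy, hgy]
          have h0 : toW v0 (y - x) = 0 := by
            rw [toW_apply]
            exact aux_inner_closure_zero C D v0 hv0cl (y - x)
              (Cᗮ.sub_mem hyC hxC) (Dᗮ.sub_mem hyD hxD)
          rw [h0]
          norm_num
        · have hgy : g y = ⊤ := by rw [hg]; simp [hyD]
          have hfy : f y = 0 ∨ f y = ⊤ := by
            rw [hf]; by_cases h : y ∈ Cᗮ <;> simp [h]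
          rcases hfy with h | h <;> simp [h, hgy]
      · have hfy : f y = ⊤ := by rw [hf]; simp [hyC]
        have hgy : g y = 0 ∨ g y = ⊤ := by
          rw [hg]; by_cases h : y ∈ Dᗮ <;> simp [h]
        rcases hgy with h | h <;> simp [h, hfy]
    rw [heq] at hmem
    obtain ⟨v', hv', hy⟩ := hmem
    have : v0 = v' := by
      apply ext_inner_right ℝ
      intro u
      rw [← toW_apply, hy u]
    exact hv0n (this ▸ hv')
  · intro h
    exact hv0n (h.closure_subset hv0cl)
end
end

section
/- Let f₁, …, f_m : X → (-∞, +∞] be proper convex functions on a real Banach space X, ε₁, …, ε_m ≥ 0, and suppose there exists x₀ ∈ ⋂ᵢ dom fᵢ such that fᵢ is continuous at x₀ for every i ∈ {2, …, m}. Then for every x ∈ ⋂ᵢ dom fᵢ, the set ∂_{ε₁} f₁(x) + ⋯ + ∂_{ε_m} f_m(x) is weak* closed in X*. -/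
open Pointwise Topology Set

noncomputable section

variable {X : Type*} [NormedAddCommGroup X] [NormedSpace ℝ X]

lemma isClosed_epsSubdiff (f : X → EReal) (hb : ∀ z, f z ≠ ⊥) (ε : ℝ) (x : X) :
    IsClosed (epsSubdiff f ε x) := by
  by_cases hT : f x = ⊤
  · convert isClosed_empty
    ext p; simp [epsSubdiff, hT]
  obtain ⟨a, ha⟩ : ∃ a : ℝ, f x = ↑a := ⟨(f x).toReal, (EReal.coe_toReal hT (hb x)).symm⟩
  have hset : epsSubdiff f ε x =
      ⋂ y : X, {p : WeakDual ℝ X | (p (y - x) : EReal) + f x ≤ f y + (ε : EReal)} := by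
    ext p
    simp [epsSubdiff, Set.mem_iInter, hT, hb x]
  rw [hset]
  refine isClosed_iInter fun y => ?_
  by_cases hy : f y = ⊤
  · have huniv : {p : WeakDual ℝ X | (p (y - x) : EReal) + f x ≤ f y + (ε : EReal)} = univ := by
      ext p
      simp only [mem_setOf_eq, mem_univ, iff_true, hy]
      rw [EReal.top_add_of_ne_bot (by simp : (ε : EReal) ≠ ⊥)]
      exact le_top
    rw [huniv]; exact isClosed_univ
  · obtain ⟨r, hr⟩ : ∃ r : ℝ, f y = ↑r := ⟨(f y).toReal, (EReal.coe_toReal hy (hb y)).symm⟩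
    have : {p : WeakDual ℝ X | (p (y - x) : EReal) + f x ≤ f y + (ε : EReal)} =
        (fun p : WeakDual ℝ X => p (y - x)) ⁻¹' Iic (r + ε - a) := by
      ext p
      simp only [mem_setOf_eq, mem_preimage, mem_Iic, ha, hr]
      rw [← EReal.coe_add, ← EReal.coe_add, EReal.coe_le_coe_iff]
      constructor <;> intro h <;> linarith
    rw [this]
    exact isClosed_Iic.preimage (WeakDual.eval_continuous _)

lemma epsSubdiff_eval_le {f : X → EReal} {ε : ℝ} {x : X} {q : WeakDual ℝ X}
    (hq : q ∈ epsSubdiff f ε x) {a M : ℝ} (ha : f x = ↑a) {y : X} (hy : f y ≤ ↑M) :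
    q (y - x) ≤ M + ε - a := by
  have h := hq.2.2 y
  rw [ha] at h
  have h2 : (↑(q (y - x)) : EReal) + ↑a ≤ ↑M + ↑ε :=
    le_trans h (add_le_add_left hy _)
  rw [← EReal.coe_add, ← EReal.coe_add, EReal.coe_le_coe_iff] at h2
  linarith

lemma wd_norm_bound {q : WeakDual ℝ X} {δ D : ℝ} (hδ : 0 < δ)
    (h : ∀ u : X, ‖u‖ ≤ δ → q u ≤ D) : ‖WeakDual.toStrongDual q‖ ≤ D / δ := by
  have hD : 0 ≤ D := by simpa using h 0 (by simp [hδ.le])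
  apply ContinuousLinearMap.opNorm_le_bound _ (by positivity)
  intro v
  rcases eq_or_ne v 0 with rfl | hv
  · simp
  have hnv : 0 < ‖v‖ := norm_pos_iff.mpr hv
  have hnorm : ∀ w : X, ‖w‖ = ‖v‖ → ‖(δ / ‖v‖) • w‖ ≤ δ := by
    intro w hw
    rw [norm_smul, Real.norm_eq_abs, abs_of_pos (by positivity), hw]
    rw [div_mul_cancel₀ _ hnv.ne']
  have h1 : (δ / ‖v‖) * q v ≤ D := by
    have := h ((δ / ‖v‖) • v) (hnorm v rfl)
    simpa [map_smul, smul_eq_mul] using this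
  have h2 : -((δ / ‖v‖) * q v) ≤ D := by
    have := h ((δ / ‖v‖) • (-v)) (hnorm (-v) (norm_neg v))
    simpa [map_smul, smul_eq_mul] using this
  have habs : |q v| * (δ / ‖v‖) ≤ D := by
    rcases abs_cases (q v) with ⟨he, _⟩ | ⟨he, _⟩
    · rw [he]; linarith [h1]
    · rw [he]; rw [mul_comm]; linarith [h2]
  have hval : ‖(WeakDual.toStrongDual q) v‖ = |q v| := by
    rw [WeakDual.toStrongDual_apply, Real.norm_eq_abs]
  rw [hval, div_mul_eq_mul_div, le_div_iff₀ hδ]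
  calc |q v| * δ = (|q v| * (δ / ‖v‖)) * ‖v‖ := by
        rw [mul_assoc, div_mul_cancel₀ _ hnv.ne']
    _ ≤ D * ‖v‖ := mul_le_mul_of_nonneg_right habs (norm_nonneg v)

lemma wd_sum_apply {ι : Type*} (s : Finset ι) (g : ι → WeakDual ℝ X) (c : X) :
    (∑ i ∈ s, g i) c = ∑ i ∈ s, g i c :=
  map_sum (AddMonoidHom.mk' (fun q : WeakDual ℝ X => q c) (fun _ _ => rfl)) g s

lemma isClosed_sum_sets {m : ℕ} [NeZero m] (S : Fin m → Set (WeakDual ℝ X))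
    (hcl : IsClosed (S 0)) (hcomp : ∀ i, i ≠ 0 → IsCompact (S i)) :
    IsClosed (∑ i, S i) := by
  classical
  have key : ∀ s : Finset (Fin m), (∀ i ∈ s, IsCompact (S i)) → IsCompact (∑ i ∈ s, S i) := by
    intro s
    induction s using Finset.induction_on with
    | empty =>
      intro _
      rw [Finset.sum_empty, ← Set.singleton_zero]
      exact isCompact_singleton
    | @insert i t hit ih =>
      intro hs
      rw [Finset.sum_insert hit]
      exact (hs i (Finset.mem_insert_self _ _)).add
        (ih fun j hj => hs j (Finset.mem_insert_of_mem hj))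
  have h0 : (Finset.univ : Finset (Fin m)) = insert 0 (Finset.univ.erase 0) := by
    simp [Finset.insert_erase (Finset.mem_univ (0 : Fin m))]
  rw [h0, Finset.sum_insert (Finset.notMem_erase _ _)]
  exact hcl.add_right_of_isCompact (key _ fun i hi => hcomp i (Finset.mem_erase.mp hi).1)


theorem stmt16 {X : Type*} [NormedAddCommGroup X] [NormedSpace ℝ X] [CompleteSpace X]
    {m : ℕ} [NeZero m] (f : Fin m → X → EReal) (ε : Fin m → ℝ) (hε : ∀ i, 0 ≤ ε i)
    (hp : ∀ i, EProper (f i)) (hc : ∀ i, EConvex (f i))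
    (x₀ : X) (hx₀ : x₀ ∈ ⋂ i, edom (f i))
    (hcont : ∀ i : Fin m, i ≠ 0 → ContinuousAt (f i) x₀) :
    ∀ x ∈ ⋂ i, edom (f i), IsClosed (∑ i, epsSubdiff (f i) (ε i) x) := by
  intro x hx
  classical
  set S : Fin m → Set (WeakDual ℝ X) := fun i => epsSubdiff (f i) (ε i) x with hS
  have hxd : ∀ i, f i x ≠ ⊤ := fun i => ((mem_iInter.mp hx i) : f i x < ⊤).ne
  have hx0d : ∀ i, f i x₀ ≠ ⊤ := fun i => ((mem_iInter.mp hx₀ i) : f i x₀ < ⊤).ne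
  choose a ha using fun i => (⟨(f i x).toReal, (EReal.coe_toReal (hxd i) ((hp i).1 x)).symm⟩ :
    ∃ r : ℝ, f i x = ↑r)
  choose b hb using fun i => (⟨(f i x₀).toReal, (EReal.coe_toReal (hx0d i) ((hp i).1 x₀)).symm⟩ :
    ∃ r : ℝ, f i x₀ = ↑r)
  have hloc : ∀ i : Fin m, i ≠ 0 → ∃ δ > 0, ∀ y : X, ‖y - x₀‖ ≤ δ → f i y ≤ ↑(b i + 1) := by
    intro i hi
    have hopen : f i ⁻¹' Iio (↑(b i + 1) : EReal) ∈ 𝓝 x₀ := by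
      apply (hcont i hi).preimage_mem_nhds
      apply isOpen_Iio.mem_nhds
      simp only [mem_Iio, hb i]
      exact_mod_cast lt_add_one (b i)
    obtain ⟨δ', hsub', hδ'⟩ := Metric.mem_nhds_iff.mp hopen
    refine ⟨δ'/2, by positivity, fun y hy => ?_⟩
    have hmem : y ∈ Metric.ball x₀ δ' := by
      rw [Metric.mem_ball, dist_eq_norm]
      calc ‖y - x₀‖ ≤ δ'/2 := hy
        _ < δ' := by linarith
    exact (hδ' hmem).le
  choose! δi hδi hMi using hloc
  have hne : (Finset.univ : Finset (Fin m)).Nonempty := Finset.univ_nonempty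
  set δ : ℝ := Finset.univ.inf' hne (fun i => if i = 0 then 1 else δi i) with hδdef
  have hδpos : 0 < δ := by
    rw [hδdef, Finset.lt_inf'_iff]
    intro i _
    by_cases h : i = 0
    · simp [h]
    · simp only [if_neg h]; exact hδi i h
  have hδle : ∀ i, i ≠ 0 → δ ≤ δi i := by
    intro i hi
    have := Finset.inf'_le (f := fun i : Fin m => if i = 0 then 1 else δi i) (Finset.mem_univ i)
    simpa [hi, ← hδdef] using this
  set c : X := x₀ - x with hc
  set C : Fin m → ℝ := fun j => b j + 1 + ε j - a j with hC
  have hub : ∀ j, ∀ q ∈ S j, q c ≤ C j := by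
    intro j q hq
    have hyb : f j x₀ ≤ ↑(b j + 1) := by
      rw [hb j]; exact_mod_cast (by linarith : b j ≤ b j + 1)
    simpa [hc, hC] using epsSubdiff_eval_le hq (ha j) hyb
  have hball2 : ∀ i, i ≠ 0 → ∀ q ∈ S i, ∀ u : X, ‖u‖ ≤ δ → q c + q u ≤ C i := by
    intro i hi q hq u hu
    have hy : f i (x₀ + u) ≤ ↑(b i + 1) :=
      hMi i hi (x₀ + u) (by simpa using hu.trans (hδle i hi))
    have hev := epsSubdiff_eval_le hq (ha i) hy
    have heq : (x₀ + u) - x = c + u := by rw [hc]; abel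
    rw [heq, map_add] at hev
    simpa [hC] using hev
  apply isClosed_of_closure_subset
  intro p hpcl
  set K : ℝ := ∑ j, |C j| with hK
  set R : ℝ := (2*K + |p c| + 1) / δ with hR
  set B : Set (WeakDual ℝ X) := WeakDual.toStrongDual ⁻¹' Metric.closedBall 0 R with hB
  set Ts : Fin m → Set (WeakDual ℝ X) := fun i => if i = 0 then S i else S i ∩ B with hTs
  have hTcl : IsClosed (∑ i, Ts i) := by
    apply isClosed_sum_sets
    · simp only [hTs, if_pos rfl, hS]
      exact isClosed_epsSubdiff _ ((hp 0).1) _ _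
    · intro i hi
      simp only [hTs, if_neg hi, hS]
      exact (WeakDual.isCompact_closedBall (𝕜 := ℝ) (E := X) 0 R).inter_left
        (isClosed_epsSubdiff _ ((hp i).1) _ _)
  set U : Set (WeakDual ℝ X) := (fun q : WeakDual ℝ X => q c) ⁻¹' Metric.ball (p c) 1 with hU
  have hUopen : IsOpen U := Metric.isOpen_ball.preimage (WeakDual.eval_continuous c)
  have hpU : p ∈ U := by simp [hU]
  have hsub : U ∩ (∑ i, S i) ⊆ ∑ i, Ts i := by
    rintro w ⟨hwU, hwS⟩
    obtain ⟨g, hg, hgw⟩ := (Set.mem_fintype_sum _ _).mp hwS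
    refine (Set.mem_fintype_sum _ _).mpr ⟨g, fun i => ?_, hgw⟩
    rcases eq_or_ne i 0 with rfl | hi
    · simpa [hTs] using hg 0
    · have hwc : |w c - p c| < 1 := by
        simpa [hU, Real.dist_eq] using hwU
      have hsumc : ∑ j, g j c = w c := by
        rw [← hgw, wd_sum_apply]
      have herase : ∑ j ∈ Finset.univ.erase i, g j c ≤ K := by
        calc ∑ j ∈ Finset.univ.erase i, g j c ≤ ∑ j ∈ Finset.univ.erase i, |C j| := by
              refine Finset.sum_le_sum fun j _ => ?_
              exact (hub j (g j) (hg j)).trans (le_abs_self _)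
          _ ≤ ∑ j, |C j| := Finset.sum_le_sum_of_subset_of_nonneg (Finset.subset_univ _)
              (fun j _ _ => abs_nonneg _)
      have hsplit : g i c + ∑ j ∈ Finset.univ.erase i, g j c = ∑ j, g j c :=
        Finset.add_sum_erase Finset.univ (fun j => g j c) (Finset.mem_univ i)
      have hgilb : p c - 1 - K ≤ g i c := by
        have h1 : p c - 1 < w c := by
          rcases abs_lt.mp hwc with ⟨h2, _⟩; linarith
        linarith
      have hCiK : |C i| ≤ K := by
        rw [hK]
        exact Finset.single_le_sum (fun j _ => abs_nonneg (C j)) (Finset.mem_univ i)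
      have hbound : ∀ u : X, ‖u‖ ≤ δ → g i u ≤ 2*K + |p c| + 1 := by
        intro u hu
        have h1 := hball2 i hi (g i) (hg i) u hu
        have h2 := le_abs_self (C i)
        have h3 := neg_abs_le (p c)
        linarith
      have hnorm := wd_norm_bound hδpos hbound
      simp only [hTs, if_neg hi]
      refine ⟨hg i, ?_⟩
      rw [hB]
      simp only [mem_preimage, Metric.mem_closedBall, dist_zero_right]
      rw [hR]
      exact hnorm
  have hTS : (∑ i, Ts i) ⊆ ∑ i, S i := by
    intro w hw
    obtain ⟨g, hg, hgw⟩ := (Set.mem_fintype_sum _ _).mp hw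
    refine (Set.mem_fintype_sum _ _).mpr ⟨g, fun i => ?_, hgw⟩
    have := hg i
    rcases eq_or_ne i 0 with rfl | hi
    · simpa [hTs] using this
    · rw [hTs] at this
      simp only [if_neg hi] at this
      exact this.1
  have hmem1 : p ∈ closure (U ∩ ∑ i, S i) := hUopen.inter_closure ⟨hpU, hpcl⟩
  have hmem2 : p ∈ closure (∑ i, Ts i) := closure_mono hsub hmem1
  rw [hTcl.closure_eq] at hmem2
  exact hTS hmem2
end
end
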